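/- Let 𝒟 be a homogeneous polynomial of degree −2(n+2) in y_1,…,y_{n+2} (grading deg y_j = −2j). Then 𝓛𝒟 = 0 if and only if 𝒟 = c·𝒟_{n+1} − P(𝒟_1,…,𝒟_{n-1}) for some constant c and homogeneous polynomial P of appropriate degree; equivalently, 𝓛𝒟 = 0 iff 𝒟 lies in the subalgebra generated by Z_2, Z_3, …, Z_{n+2} (i.e., when written as a polynomial in the algebraically independent elements y_1, Z_2, …, Z_{n+2}, the variable y_1 does not appear). -/

import Mathlib

open MvPolynomial

/-- The shift derivation Σ_s y_{s+1} ∂/∂y_s (variable `X i` represents y_{i+1}). -/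
noncomputable def shiftD (P : MvPolynomial ℕ ℝ) : MvPolynomial ℕ ℝ :=
  ∑ s ∈ P.vars, X (s + 1) * pderiv s P

/-- The operator 𝓛_k = Σ_s y_{s+1} ∂/∂y_s + 2k y_1 (multiplication). -/
noncomputable def Lop (k : ℝ) (P : MvPolynomial ℕ ℝ) : MvPolynomial ℕ ℝ :=
  shiftD P + C (2 * k) * X 0 * P

/-- The derivation 𝓛 with 𝓛 y_1 = 1 and 𝓛 y_{s+1} = −(s+1)s y_s for s ≥ 1. -/
noncomputable def Lder (P : MvPolynomial ℕ ℝ) : MvPolynomial ℕ ℝ :=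
  pderiv 0 P - ∑ s ∈ P.vars,
    if 1 ≤ s then (C (((s + 1) * s : ℕ) : ℝ) * X (s - 1) * pderiv s P) else 0

/-- The Euler-type operator ℰ = −2 Σ_s s y_s ∂/∂y_s. -/
noncomputable def Eop (P : MvPolynomial ℕ ℝ) : MvPolynomial ℕ ℝ :=
  - ∑ s ∈ P.vars, C ((2 * (s + 1) : ℕ) : ℝ) * X s * pderiv s P

/-- Z_2 = y_2 + y_1², Z_{k+1} = 𝓛_k Z_k; the differential polynomials 𝒟_k = Z_{k+1}. -/
noncomputable def Z : ℕ → MvPolynomial ℕ ℝ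
  | 0 => 0
  | 1 => 0
  | 2 => X 1 + X 0 ^ 2
  | (n + 3) => Lop ((n + 2 : ℕ) : ℝ) (Z (n + 2))

namespace BRaux

noncomputable def SD : Derivation ℝ (MvPolynomial ℕ ℝ) (MvPolynomial ℕ ℝ) :=
  mkDerivation ℝ (fun s => X (s + 1))

noncomputable def dL : ℕ → MvPolynomial ℕ ℝ :=
  fun s => if s = 0 then 1 else -(C (((s + 1) * s : ℕ) : ℝ) * X (s - 1))

noncomputable def LD : Derivation ℝ (MvPolynomial ℕ ℝ) (MvPolynomial ℕ ℝ) :=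
  mkDerivation ℝ dL

noncomputable def ED : Derivation ℝ (MvPolynomial ℕ ℝ) (MvPolynomial ℕ ℝ) :=
  mkDerivation ℝ (fun s => -(C ((2 * (s + 1) : ℕ) : ℝ) * X s))

lemma mkDerivation_monomial_eq (f : ℕ → MvPolynomial ℕ ℝ) (m : ℕ →₀ ℕ) (r : ℝ)
    (T : Finset ℕ) (hT : m.support ⊆ T) :
    mkDerivation ℝ f (monomial m r) = ∑ s ∈ T, f s * pderiv s (monomial m r) := by
  rw [mkDerivation_monomial]
  rw [Finsupp.smul_sum, Finsupp.sum]
  rw [Finset.sum_subset hT]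
  · apply Finset.sum_congr rfl
    intro i _
    rw [pderiv_monomial, ← C_mul_monomial, smul_eq_mul, smul_eq_C_mul]
    ring
  · intro s _ hs
    have : m s = 0 := Finsupp.notMem_support_iff.mp hs
    simp [this]

end BRaux

namespace BRaux2
open BRaux

lemma mkDerivation_eq_sum (f : ℕ → MvPolynomial ℕ ℝ) (P : MvPolynomial ℕ ℝ)
    (T : Finset ℕ) (hT : P.vars ⊆ T) :
    mkDerivation ℝ f P = ∑ s ∈ T, f s * pderiv s P := by
  have key : ∀ m ∈ P.support, (m : ℕ →₀ ℕ).support ⊆ T := by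
    intro m hm i hi
    exact hT ((mem_vars i).mpr ⟨m, hm, hi⟩)
  calc mkDerivation ℝ f P
      = ∑ m ∈ P.support, mkDerivation ℝ f (monomial m (coeff m P)) := by
        rw [← map_sum, ← P.as_sum]
    _ = ∑ m ∈ P.support, ∑ s ∈ T, f s * pderiv s (monomial m (coeff m P)) := by
        exact Finset.sum_congr rfl fun m hm =>
          BRaux.mkDerivation_monomial_eq f m _ T (key m hm)
    _ = ∑ s ∈ T, f s * pderiv s P := by
        rw [Finset.sum_comm]
        refine Finset.sum_congr rfl fun s _ => ?_
        rw [← Finset.mul_sum, ← map_sum, ← P.as_sum]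

lemma shiftD_eq (P : MvPolynomial ℕ ℝ) : shiftD P = SD P := by
  rw [shiftD, SD, mkDerivation_eq_sum _ P P.vars subset_rfl]

lemma Eop_eq (P : MvPolynomial ℕ ℝ) : Eop P = ED P := by
  rw [Eop, ED, mkDerivation_eq_sum _ P P.vars subset_rfl]
  rw [← Finset.sum_neg_distrib]
  exact Finset.sum_congr rfl fun s _ => by ring

lemma Lder_eq (P : MvPolynomial ℕ ℝ) : Lder P = LD P := by
  classical
  rw [LD, mkDerivation_eq_sum dL P (insert 0 P.vars) (Finset.subset_insert _ _), Lder]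
  have h1 : ∀ s ∈ insert 0 P.vars, dL s * pderiv s P =
      (if s = 0 then pderiv 0 P else 0) -
      (if 1 ≤ s then C (((s + 1) * s : ℕ) : ℝ) * X (s - 1) * pderiv s P else 0) := by
    intro s _
    cases s with
    | zero => simp [dL]
    | succ k =>
        rw [dL, if_neg (Nat.succ_ne_zero k), if_pos (Nat.le_add_left 1 k)]
        rw [if_neg (Nat.succ_ne_zero k), Nat.succ_sub_one]
        ring
  rw [Finset.sum_congr rfl h1, Finset.sum_sub_distrib, Finset.sum_ite_eq' _ (0 : ℕ)]
  rw [if_pos (Finset.mem_insert_self 0 P.vars)]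
  congr 1
  refine (Finset.sum_insert_of_eq_zero_if_notMem ?_).symm
  intro _
  simp

end BRaux2

namespace BRaux3
open BRaux BRaux2 Finsupp

abbrev wt : ℕ → ℕ := fun i => i + 1

lemma weight_sub_single {m : ℕ →₀ ℕ} {s : ℕ} (hs : s ∈ m.support) :
    weight wt (m - Finsupp.single s 1) + (s + 1) = weight wt m := by
  have hle : Finsupp.single s 1 ≤ m := by
    rw [Finsupp.single_le_iff]
    exact Nat.one_le_iff_ne_zero.mpr (Finsupp.mem_support_iff.mp hs)
  have h2 : (m - Finsupp.single s 1) + Finsupp.single s 1 = m := tsub_add_cancel_of_le hle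
  have := congrArg (weight wt) h2
  rw [map_add] at this
  rw [← this]
  congr 1
  rw [weight_apply, Finsupp.sum_single_index]
  · simp [wt]
  · simp

lemma monomial_sub_mul_X {m : ℕ →₀ ℕ} {s : ℕ} (hs : s ∈ m.support) (r : ℝ) (t : ℕ) :
    monomial (m - Finsupp.single s 1) r * X t
      = monomial (m - Finsupp.single s 1 + Finsupp.single t 1) r := by
  rw [X, monomial_mul, mul_one]

lemma SD_monomial_homog (m : ℕ →₀ ℕ) (r : ℝ) (k : ℕ) (hm : weight wt m = k) :
    IsWeightedHomogeneous wt (SD (monomial m r)) (k + 1) := by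
  rw [SD, mkDerivation_monomial]
  rw [← mem_weightedHomogeneousSubmodule ℝ]
  apply Submodule.smul_mem
  rw [Finsupp.sum]
  apply Submodule.sum_mem
  intro s hs
  rw [smul_eq_mul, monomial_sub_mul_X hs]
  rw [mem_weightedHomogeneousSubmodule ℝ]
  apply isWeightedHomogeneous_monomial
  have h1 := weight_sub_single hs
  have h2 : weight wt (Finsupp.single (s + 1) 1) = s + 2 := by
    rw [weight_apply, Finsupp.sum_single_index] <;> simp [wt]
  rw [map_add, h2]
  omega

lemma homog_sum_support (P : MvPolynomial ℕ ℝ) (k : ℕ)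
    (h : ∀ m ∈ P.support, IsWeightedHomogeneous wt ((monomial m) (coeff m P)) k) :
    IsWeightedHomogeneous wt P k := by
  rw [← mem_weightedHomogeneousSubmodule ℝ]
  nth_rw 1 [P.as_sum]
  apply Submodule.sum_mem
  intro m hm
  exact (mem_weightedHomogeneousSubmodule ℝ _ _ _).mpr (h m hm)

lemma SD_homog {P : MvPolynomial ℕ ℝ} {k : ℕ} (h : IsWeightedHomogeneous wt P k) :
    IsWeightedHomogeneous wt (SD P) (k + 1) := by
  have : SD P = ∑ m ∈ P.support, SD (monomial m (coeff m P)) := by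
    rw [← map_sum, ← P.as_sum]
  rw [this, ← mem_weightedHomogeneousSubmodule ℝ]
  apply Submodule.sum_mem
  intro m hm
  rw [mem_weightedHomogeneousSubmodule ℝ]
  exact SD_monomial_homog m _ (k) (h (MvPolynomial.mem_support_iff.mp hm))

lemma ED_monomial (m : ℕ →₀ ℕ) (r : ℝ) :
    ED (monomial m r) = C (-(2 * ((weight wt m : ℕ) : ℝ))) * monomial m r := by
  rw [ED, mkDerivation_monomial, Finsupp.sum]
  have h1 : ∀ s ∈ m.support,
      (monomial (m - Finsupp.single s 1)) ((m s : ℕ) : ℝ) • (-(C ((2 * (s + 1) : ℕ) : ℝ) * X s))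
        = monomial m (-(((2 * (s + 1) * m s : ℕ)) : ℝ)) := by
    intro s hs
    have hle : Finsupp.single s 1 ≤ m := by
      rw [Finsupp.single_le_iff]
      exact Nat.one_le_iff_ne_zero.mpr (Finsupp.mem_support_iff.mp hs)
    rw [smul_eq_mul, show (monomial (m - Finsupp.single s 1)) ((m s : ℕ) : ℝ) *
          -(C ((2 * (s + 1) : ℕ) : ℝ) * X s)
        = -((C ((2 * (s + 1) : ℕ) : ℝ) * monomial (m - Finsupp.single s 1) ((m s : ℕ) : ℝ)) * X s)
        by ring]
    rw [C_mul_monomial, monomial_sub_mul_X hs, tsub_add_cancel_of_le hle, ← map_neg]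
    congr 1
    push_cast
    ring
  rw [Finset.sum_congr rfl h1, ← map_sum, smul_monomial, C_mul_monomial]
  congr 1
  have hw : (weight wt m : ℕ) = ∑ s ∈ m.support, (s + 1) * m s := by
    rw [weight_apply, Finsupp.sum]
    exact Finset.sum_congr rfl fun s _ => by simp [wt, mul_comm]
  have h2 : ∑ s ∈ m.support, -(((2 * (s + 1) * m s : ℕ)) : ℝ)
      = -(2 * ((∑ s ∈ m.support, (s + 1) * m s : ℕ) : ℝ)) := by
    push_cast
    rw [Finset.mul_sum, ← Finset.sum_neg_distrib]
    exact Finset.sum_congr rfl fun s _ => by ring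
  rw [smul_eq_mul, h2, hw]
  ring

lemma ED_homog {P : MvPolynomial ℕ ℝ} {k : ℕ} (h : IsWeightedHomogeneous wt P k) :
    ED P = C (-(2 * (k : ℝ))) * P := by
  have h0 : ED P = ∑ m ∈ P.support, ED (monomial m (coeff m P)) := by
    rw [← map_sum, ← P.as_sum]
  rw [h0, Finset.sum_congr rfl (fun m hm => ?_), ← Finset.mul_sum, ← P.as_sum]
  rw [ED_monomial, h (MvPolynomial.mem_support_iff.mp hm)]

end BRaux3

namespace BRaux4
open BRaux BRaux2 BRaux3 Finsupp

lemma LD_X0 : LD (X 0) = 1 := by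
  rw [LD, mkDerivation_X]; simp [dL]

lemma commutator_LD_SD : ⁅LD, SD⁆ = ED := by
  apply derivation_ext
  intro i
  rw [Derivation.commutator_apply]
  rw [SD, ED, LD, mkDerivation_X, mkDerivation_X]
  cases i with
  | zero =>
    rw [mkDerivation_X]
    norm_num [dL, Derivation.map_one_eq_zero]
  | succ k =>
    rw [mkDerivation_X]
    simp only [dL, if_neg (Nat.succ_ne_zero (k+1)), if_neg (Nat.succ_ne_zero k),
      Nat.succ_sub_one]
    rw [map_neg, Derivation.leibniz, mkDerivation_X]
    simp only [derivation_C, smul_zero, add_zero, smul_eq_mul, ← smul_eq_C_mul]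
    rw [mkDerivation_X]
    simp only [mul_zero, add_zero]
    match_scalars
    push_cast
    ring

lemma LD_SD_apply (P : MvPolynomial ℕ ℝ) : LD (SD P) = SD (LD P) + ED P := by
  have := congrArg (fun (D : Derivation ℝ (MvPolynomial ℕ ℝ) (MvPolynomial ℕ ℝ)) => D P)
    commutator_LD_SD
  simp only [Derivation.commutator_apply] at this
  linear_combination (norm := module) this
  
end BRaux4

namespace BRaux5
open BRaux BRaux2 BRaux3 BRaux4 Finsupp

lemma homog_congr {P : MvPolynomial ℕ ℝ} {m n : ℕ} (h : IsWeightedHomogeneous wt P m)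
    (e : m = n) : IsWeightedHomogeneous wt P n := e ▸ h

lemma Lop_homog {P : MvPolynomial ℕ ℝ} {k : ℕ} (h : IsWeightedHomogeneous wt P k) (r : ℝ) :
    IsWeightedHomogeneous wt (Lop r P) (k + 1) := by
  rw [Lop, shiftD_eq]
  apply (SD_homog h).add
  have := ((isWeightedHomogeneous_C wt (2 * r)).mul (isWeightedHomogeneous_X ℝ wt 0)).mul h
  exact homog_congr this (by simp [wt]; omega)

lemma Z_homog : ∀ k, IsWeightedHomogeneous wt (Z k) k
  | 0 => isWeightedHomogeneous_zero ℝ wt 0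
  | 1 => isWeightedHomogeneous_zero ℝ wt 1
  | 2 => by
      rw [Z, pow_two]
      exact (isWeightedHomogeneous_X ℝ wt 1).add
        (homog_congr ((isWeightedHomogeneous_X ℝ wt 0).mul (isWeightedHomogeneous_X ℝ wt 0)) rfl)
  | (n + 3) => by
      rw [Z]
      exact homog_congr (Lop_homog (Z_homog (n + 2)) _) rfl

lemma LD_Z : ∀ k, LD (Z k) = 0
  | 0 => map_zero _
  | 1 => map_zero _
  | 2 => by
      rw [Z, pow_two, map_add, Derivation.leibniz, LD_X0]
      rw [LD, mkDerivation_X, dL]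
      simp only [if_neg (Nat.succ_ne_zero 0), Nat.succ_sub_one]
      simp only [smul_eq_mul, mul_one, ← smul_eq_C_mul]
      match_scalars
      push_cast
      ring
  | (n + 3) => by
      rw [Z, Lop, shiftD_eq, map_add, mul_assoc, C_mul', Derivation.map_smul]
      rw [LD_SD_apply, LD_Z (n + 2), map_zero, Derivation.leibniz, LD_X0]
      rw [LD_Z (n + 2)]
      rw [ED_homog (Z_homog (n + 2))]
      simp only [smul_zero, smul_eq_mul, mul_one, zero_add, mul_zero, add_zero]
      rw [map_neg, neg_mul, smul_eq_C_mul, neg_add_cancel]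

lemma Lder_Z (k : ℕ) : Lder (Z k) = 0 := by rw [Lder_eq, LD_Z]

end BRaux5

namespace BRaux6
open BRaux BRaux2 BRaux3 BRaux4 BRaux5 Finsupp

lemma supported_adjoin (s : Set ℕ) :
    MvPolynomial.supported ℝ s = Algebra.adjoin ℝ (MvPolynomial.X '' s) := rfl

lemma derivation_mem_supported (D : Derivation ℝ (MvPolynomial ℕ ℝ) (MvPolynomial ℕ ℝ))
    (s t : Set ℕ) (hst : MvPolynomial.supported ℝ s ≤ MvPolynomial.supported ℝ t)
    (hX : ∀ i ∈ s, D (X i) ∈ MvPolynomial.supported ℝ t)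
    {Q : MvPolynomial ℕ ℝ} (hQ : Q ∈ MvPolynomial.supported ℝ s) :
    D Q ∈ MvPolynomial.supported ℝ t := by
  rw [supported_adjoin] at hQ
  induction hQ using Algebra.adjoin_induction with
  | mem x hx =>
      obtain ⟨i, hi, rfl⟩ := hx
      exact hX i hi
  | algebraMap r => rw [Derivation.map_algebraMap]; exact Subalgebra.zero_mem _
  | add x y hx hy ihx ihy => rw [map_add]; exact Subalgebra.add_mem _ ihx ihy
  | mul x y hx hy ihx ihy =>
      rw [Derivation.leibniz]
      have hx' : x ∈ MvPolynomial.supported ℝ t := hst ((supported_adjoin s) ▸ hx)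
      have hy' : y ∈ MvPolynomial.supported ℝ t := hst ((supported_adjoin s) ▸ hy)
      simp only [smul_eq_mul]
      exact Subalgebra.add_mem _ (Subalgebra.mul_mem _ hx' ihy) (Subalgebra.mul_mem _ hy' ihx)

lemma aeval_congr {S : Type} [CommSemiring S] [Algebra ℝ S] (s : Set ℕ)
    (f g : ℕ → S) (hfg : ∀ i ∈ s, f i = g i)
    {Q : MvPolynomial ℕ ℝ} (hQ : Q ∈ MvPolynomial.supported ℝ s) :
    aeval f Q = aeval g Q := by
  rw [supported_adjoin] at hQ
  induction hQ using Algebra.adjoin_induction with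
  | mem x hx =>
      obtain ⟨i, hi, rfl⟩ := hx
      rw [aeval_X, aeval_X]; exact hfg i hi
  | algebraMap r => rw [AlgHom.commutes, AlgHom.commutes]
  | add x y hx hy ihx ihy => rw [map_add, map_add, ihx, ihy]
  | mul x y hx hy ihx ihy => rw [map_mul, map_mul, ihx, ihy]

lemma SD_supported {k : ℕ} {Q : MvPolynomial ℕ ℝ}
    (hQ : Q ∈ MvPolynomial.supported ℝ {i | i < k}) :
    SD Q ∈ MvPolynomial.supported ℝ {i | i < k + 1} := by
  refine derivation_mem_supported SD _ _ (supported_mono fun i (hi : i < k) => Nat.lt_succ_of_lt hi)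
    (fun i hi => ?_) hQ
  rw [SD, mkDerivation_X]
  exact X_mem_supported.mpr (Nat.succ_lt_succ hi)

lemma Z_sub_supported : ∀ k : ℕ, Z (k + 2) - X (k + 1) ∈ MvPolynomial.supported ℝ {i | i < k + 1}
  | 0 => by
      have : Z 2 - X 1 = X 0 * X 0 := by rw [Z, pow_two]; ring
      rw [this]
      exact Subalgebra.mul_mem _ (X_mem_supported.mpr (by simp)) (X_mem_supported.mpr (by simp))
  | (k + 1) => by
      have hrec : Z (k + 3) - X (k + 2)
          = SD (Z (k + 2) - X (k + 1)) + C (2 * ((k + 2 : ℕ) : ℝ)) * X 0 * Z (k + 2) := by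
        rw [Z, Lop, shiftD_eq, map_sub, SD, mkDerivation_X]
        push_cast
        ring
      rw [hrec]
      have h1 : SD (Z (k + 2) - X (k + 1)) ∈ MvPolynomial.supported ℝ {i | i < k + 2} :=
        SD_supported (Z_sub_supported k)
      have hZ : Z (k + 2) ∈ MvPolynomial.supported ℝ {i | i < k + 2} := by
        have h2 : Z (k + 2) = (Z (k + 2) - X (k + 1)) + X (k + 1) := by ring
        rw [h2]
        exact Subalgebra.add_mem _ (supported_mono
          (fun i (hi : i < k + 1) => Nat.lt_succ_of_lt hi) (Z_sub_supported k))
          (X_mem_supported.mpr (show k + 1 ∈ {i | i < k + 2} from Nat.lt_succ_self _))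
      refine Subalgebra.add_mem _ h1 (Subalgebra.mul_mem _ (Subalgebra.mul_mem _ ?_ ?_) hZ)
      · exact Subalgebra.algebraMap_mem _ _
      · exact X_mem_supported.mpr (show 0 ∈ {i | i < k + 2} from Nat.succ_pos _)

lemma Z_supported (k : ℕ) : Z (k + 2) ∈ MvPolynomial.supported ℝ {i | i < k + 2} := by
  have h2 : Z (k + 2) = (Z (k + 2) - X (k + 1)) + X (k + 1) := by ring
  rw [h2]
  exact Subalgebra.add_mem _ (supported_mono
    (fun i (hi : i < k + 1) => Nat.lt_succ_of_lt hi) (Z_sub_supported k))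
    (X_mem_supported.mpr (show k + 1 ∈ {i | i < k + 2} from Nat.lt_succ_self _))

end BRaux6

namespace BRaux7
open BRaux BRaux2 BRaux3 BRaux4 BRaux5 BRaux6 Finsupp

noncomputable def gψ : ℕ → MvPolynomial ℕ ℝ := fun i => if i = 0 then X 0 else Z (i + 1)

noncomputable def ψ : MvPolynomial ℕ ℝ →ₐ[ℝ] MvPolynomial ℕ ℝ := aeval gψ

noncomputable def tinv : ℕ → MvPolynomial ℕ ℝ
  | 0 => X 0
  | (k + 1) => X (k + 1) -
      aeval (fun j => if h : j < k + 1 then tinv j else 0) (Z (k + 2) - X (k + 1))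
  decreasing_by exact h

lemma tau_psi_X (i : ℕ) : aeval tinv (gψ i) = X i := by
  cases i with
  | zero => simp [gψ, tinv]
  | succ k =>
      rw [gψ, if_neg (Nat.succ_ne_zero k)]
      have hsplit : Z (k + 2) = (Z (k + 2) - X (k + 1)) + X (k + 1) := by ring
      rw [hsplit, map_add, aeval_X]
      have hcongr : aeval tinv (Z (k + 2) - X (k + 1)) =
          aeval (fun j => if h : j < k + 1 then tinv j else 0) (Z (k + 2) - X (k + 1)) := by
        refine aeval_congr {i | i < k + 1} _ _ (fun j hj => ?_) (Z_sub_supported k)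
        simp only [Set.mem_setOf_eq] at hj
        rw [dif_pos hj]
      rw [hcongr, show tinv (k + 1) = X (k + 1) -
          aeval (fun j => if h : j < k + 1 then tinv j else 0) (Z (k + 2) - X (k + 1)) by rw [tinv]]
      ring

lemma psi_leftinv (Q : MvPolynomial ℕ ℝ) : aeval tinv (ψ Q) = Q := by
  have h : (aeval tinv).comp ψ = AlgHom.id ℝ (MvPolynomial ℕ ℝ) := by
    apply MvPolynomial.algHom_ext
    intro i
    rw [AlgHom.comp_apply, AlgHom.id_apply, ψ, aeval_X]
    exact tau_psi_X i
  calc aeval tinv (ψ Q) = ((aeval tinv).comp ψ) Q := rfl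
    _ = Q := by rw [h]; rfl

lemma psi_inj : Function.Injective ψ :=
  Function.LeftInverse.injective psi_leftinv

lemma X_mem_range : ∀ k, X k ∈ ψ.range := by
  intro k
  induction k using Nat.strong_induction_on with
  | _ k ih =>
    match k with
    | 0 =>
        rw [AlgHom.mem_range]
        exact ⟨X 0, by rw [ψ, aeval_X, gψ, if_pos rfl]⟩
    | (j + 1) =>
        have hq : Z (j + 2) - X (j + 1) ∈ ψ.range := by
          have hle : MvPolynomial.supported ℝ {i | i < j + 1} ≤ ψ.range := by
            rw [supported_adjoin]
            apply Algebra.adjoin_le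
            rintro x ⟨i, hi, rfl⟩
            simp only [Set.mem_setOf_eq] at hi
            exact ih i hi
          exact hle (Z_sub_supported j)
        have hZ : Z (j + 2) ∈ ψ.range := by
          rw [AlgHom.mem_range]
          exact ⟨X (j + 1), by rw [ψ, aeval_X, gψ, if_neg (Nat.succ_ne_zero j)]⟩
        have : X (j + 1) = Z (j + 2) - (Z (j + 2) - X (j + 1)) := by ring
        rw [this]
        exact Subalgebra.sub_mem _ hZ hq

lemma psi_surj : Function.Surjective ψ := by
  rw [← AlgHom.range_eq_top]
  rw [eq_top_iff, ← MvPolynomial.adjoin_range_X]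
  apply Algebra.adjoin_le
  rintro x ⟨i, rfl⟩
  exact X_mem_range i

lemma LD_g (j : ℕ) : LD (gψ j) = if j = 0 then 1 else 0 := by
  cases j with
  | zero => rw [gψ]; simp [LD_X0]
  | succ k =>
      rw [gψ, if_neg (Nat.succ_ne_zero k), if_neg (Nat.succ_ne_zero k)]
      exact LD_Z (k + 2)

lemma LD_aeval (Q : MvPolynomial ℕ ℝ) : LD (aeval gψ Q) = aeval gψ (pderiv 0 Q) := by
  induction Q using MvPolynomial.induction_on with
  | C a => rw [aeval_C, pderiv_C, map_zero]; exact LD.map_algebraMap a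
  | add p q hp hq => rw [map_add, map_add, hp, hq, ← map_add, ← map_add]
  | mul_X p j hp =>
      rw [map_mul, aeval_X, Derivation.leibniz, hp, LD_g, pderiv_mul, map_add, map_mul, aeval_X]
      by_cases hj : j = 0
      · subst hj
        rw [if_pos rfl, pderiv_X_self, map_mul, map_one]
        simp only [smul_eq_mul, mul_one]
        ring
      · rw [if_neg hj, pderiv_X_of_ne hj]
        simp only [smul_eq_mul, mul_zero, map_zero, add_zero, zero_add, smul_zero]
        ring

end BRaux7

namespace BRaux8
open BRaux BRaux2 BRaux3 BRaux4 BRaux5 BRaux6 BRaux7 Finsupp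

lemma homog_congr' {σ' : Type} {w' : σ' → ℕ} {P : MvPolynomial σ' ℝ} {m n : ℕ}
    (h : IsWeightedHomogeneous w' P m) (e : m = n) : IsWeightedHomogeneous w' P n := e ▸ h

lemma homog_pow {σ' : Type} {w' : σ' → ℕ} {p : MvPolynomial σ' ℝ} {m : ℕ}
    (h : IsWeightedHomogeneous w' p m) (e : ℕ) :
    IsWeightedHomogeneous w' (p ^ e) (e * m) := by
  induction e with
  | zero => rw [pow_zero, zero_mul]; exact isWeightedHomogeneous_one ℝ w'
  | succ f ih =>
      rw [pow_succ]
      exact homog_congr' (ih.mul h) (by ring)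

lemma aeval_homog {σ' : Type} (w' : σ' → ℕ) (g : ℕ → MvPolynomial σ' ℝ)
    (hg : ∀ i, IsWeightedHomogeneous w' (g i) (wt i))
    {Q : MvPolynomial ℕ ℝ} {k : ℕ} (hQ : IsWeightedHomogeneous wt Q k) :
    IsWeightedHomogeneous w' (aeval g Q) k := by
  rw [show aeval g Q = ∑ m ∈ Q.support, aeval g (monomial m (coeff m Q)) by
    rw [← map_sum, ← Q.as_sum]]
  rw [← mem_weightedHomogeneousSubmodule ℝ]
  apply Submodule.sum_mem
  intro m hm
  rw [mem_weightedHomogeneousSubmodule ℝ, aeval_monomial]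
  have hprod : IsWeightedHomogeneous w' (m.prod fun i k => g i ^ k)
      (∑ i ∈ m.support, m i * wt i) := by
    rw [Finsupp.prod]
    exact IsWeightedHomogeneous.prod m.support _ (fun i => m i * wt i)
      (fun i _ => homog_pow (hg i) (m i))
  have hC : IsWeightedHomogeneous w' ((algebraMap ℝ (MvPolynomial σ' ℝ)) (coeff m Q)) 0 := by
    rw [MvPolynomial.algebraMap_eq]
    exact isWeightedHomogeneous_C w' _
  refine homog_congr' (hC.mul hprod) ?_
  have hw := hQ (MvPolynomial.mem_support_iff.mp hm)
  rw [← hw, weight_apply, Finsupp.sum]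
  rw [zero_add]
  exact Finset.sum_congr rfl fun i _ => by rw [smul_eq_mul, mul_comm]

lemma psi_eq_zero {x : MvPolynomial ℕ ℝ} (hx : ψ x = 0) : x = 0 :=
  psi_inj (by rw [hx, map_zero])

lemma hg_hom : ∀ i, IsWeightedHomogeneous wt (gψ i) (wt i) := by
  intro i
  cases i with
  | zero => rw [gψ]; exact isWeightedHomogeneous_X ℝ wt 0
  | succ k =>
      rw [gψ, if_neg (Nat.succ_ne_zero k)]
      exact Z_homog (k + 2)

lemma exists_Q {D : MvPolynomial ℕ ℝ} {N : ℕ} (hhom : IsWeightedHomogeneous wt D N)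
    (hLD : LD D = 0) :
    ∃ Q : MvPolynomial ℕ ℝ, ψ Q = D ∧ IsWeightedHomogeneous wt Q N ∧ pderiv 0 Q = 0 := by
  obtain ⟨Q0, hQ0⟩ := psi_surj D
  have hfin := weightedHomogeneousComponent_finsupp (w := wt) Q0
  set T := hfin.toFinset with hT
  have hQ0sum : ∑ d ∈ T, weightedHomogeneousComponent wt d Q0 = Q0 := by
    rw [← finsum_eq_sum _ hfin, sum_weightedHomogeneousComponent]
  have hmemT : ∀ d, d ∉ T → weightedHomogeneousComponent wt d Q0 = 0 := by
    intro d hd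
    rw [hT] at hd
    by_contra hne
    exact hd ((Set.Finite.mem_toFinset hfin).mpr hne)
  have hhomd : ∀ d, IsWeightedHomogeneous wt (ψ (weightedHomogeneousComponent wt d Q0)) d :=
    fun d => aeval_homog wt gψ hg_hom (weightedHomogeneousComponent_isWeightedHomogeneous d Q0)
  have hzero : ∀ d, d ≠ N → ψ (weightedHomogeneousComponent wt d Q0) = 0 := by
    intro d hd
    have hDd : weightedHomogeneousComponent wt d D = 0 :=
      hhom.weightedHomogeneousComponent_ne d hd
    have hsum : weightedHomogeneousComponent wt d D
        = ∑ e ∈ T, weightedHomogeneousComponent wt d (ψ (weightedHomogeneousComponent wt e Q0)) := by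
      conv_lhs => rw [← hQ0, ← hQ0sum]
      rw [map_sum, map_sum]
    have hterm : ∀ e ∈ T, weightedHomogeneousComponent wt d (ψ (weightedHomogeneousComponent wt e Q0))
        = if e = d then ψ (weightedHomogeneousComponent wt d Q0) else 0 := by
      intro e _
      by_cases he : e = d
      · subst he
        rw [if_pos rfl]
        exact (hhomd e).weightedHomogeneousComponent_same
      · rw [if_neg he]
        exact (hhomd e).weightedHomogeneousComponent_ne d (fun h => he h.symm)
    rw [Finset.sum_congr rfl hterm, Finset.sum_ite_eq' T d] at hsum
    by_cases hdT : d ∈ T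
    · rw [if_pos hdT] at hsum
      rw [← hsum, hDd]
    · rw [hmemT d hdT, map_zero]
  have hQ0N : weightedHomogeneousComponent wt N Q0 = Q0 := by
    have hterm : ∀ e ∈ T, weightedHomogeneousComponent wt e Q0
        = if e = N then weightedHomogeneousComponent wt N Q0 else 0 := by
      intro e _
      by_cases he : e = N
      · subst he; rw [if_pos rfl]
      · rw [if_neg he]
        exact psi_eq_zero (hzero e he)
    rw [Finset.sum_congr rfl hterm, Finset.sum_ite_eq' T N] at hQ0sum
    by_cases hNT : N ∈ T
    · rw [if_pos hNT] at hQ0sum; exact hQ0sum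
    · rw [if_neg hNT] at hQ0sum
      rw [← hQ0sum, map_zero]
  refine ⟨Q0, hQ0, ?_, ?_⟩
  · rw [← hQ0N]
    exact weightedHomogeneousComponent_isWeightedHomogeneous N Q0
  · apply psi_eq_zero
    have := LD_aeval Q0
    rw [show aeval gψ Q0 = ψ Q0 from rfl, hQ0, hLD] at this
    rw [show ψ (pderiv 0 Q0) = aeval gψ (pderiv 0 Q0) from rfl, ← this]

end BRaux8

namespace BRaux9
open BRaux BRaux2 BRaux3 BRaux4 BRaux5 BRaux6 BRaux7 BRaux8 Finsupp

lemma coeff_pderiv (i : ℕ) (Q : MvPolynomial ℕ ℝ) (m : ℕ →₀ ℕ) :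
    coeff m (pderiv i Q) = ((m i + 1 : ℕ) : ℝ) * coeff (m + Finsupp.single i 1) Q := by
  induction Q using MvPolynomial.induction_on' with
  | add p q hp hq => rw [map_add, coeff_add, coeff_add, hp, hq]; ring
  | monomial d r =>
      rw [pderiv_monomial, coeff_monomial, coeff_monomial]
      by_cases h : d = m + Finsupp.single i 1
      · have h1 : d - Finsupp.single i 1 = m := by rw [h, add_tsub_cancel_right]
        have h2 : d i = m i + 1 := by
          rw [h, Finsupp.add_apply, Finsupp.single_eq_same]
        rw [if_pos h1, if_pos h, h2]
        push_cast
        ring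
      · rw [if_neg h]
        by_cases h1 : d - Finsupp.single i 1 = m
        · rw [if_pos h1]
          have hdi : d i = 0 := by
            by_contra hdi
            apply h
            rw [← h1, tsub_add_cancel_of_le]
            rw [Finsupp.single_le_iff]
            omega
          rw [hdi]
          simp
        · rw [if_neg h1, mul_zero]

lemma support_m0 {Q : MvPolynomial ℕ ℝ} (h : pderiv 0 Q = 0) {m : ℕ →₀ ℕ}
    (hm : m ∈ Q.support) : m 0 = 0 := by
  by_contra h0
  have hle : Finsupp.single 0 1 ≤ m := by rw [Finsupp.single_le_iff]; omega
  have := coeff_pderiv 0 Q (m - Finsupp.single 0 1)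
  rw [h, coeff_zero, tsub_add_cancel_of_le hle] at this
  rcases mul_eq_zero.mp this.symm with h' | h'
  · exact Nat.cast_ne_zero.mpr (Nat.succ_ne_zero _) h'
  · exact (MvPolynomial.mem_support_iff.mp hm) h'

lemma weight_single (a b : ℕ) : weight wt (Finsupp.single a b) = b * (a + 1) := by
  rw [weight_apply, Finsupp.sum_single_index] <;> simp [wt]

lemma weight_zero_imp {r : ℕ →₀ ℕ} (h : weight wt r = 0) : r = 0 := by
  ext i
  by_contra hi
  have := Finsupp.le_weight_of_ne_zero' (w := wt) hi
  rw [h] at this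
  exact absurd this (by simp [wt])

lemma term_le_weight (m : ℕ →₀ ℕ) (s : ℕ) (hs : m s ≠ 0) :
    m s * (s + 1) ≤ weight wt m := by
  rw [weight_apply, Finsupp.sum]
  have := Finset.single_le_sum (f := fun i => m i • wt i)
    (fun i _ => Nat.zero_le _) (Finsupp.mem_support_iff.mpr hs)
  simpa [wt] using this

lemma support_classify {n : ℕ} (hn : 1 ≤ n) {m : ℕ →₀ ℕ}
    (hw : weight wt m = n + 2) (h0 : m 0 = 0) :
    m = Finsupp.single (n + 1) 1 ∨ (∀ s, m s ≠ 0 → 1 ≤ s ∧ s < n) := by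
  by_cases htop : m (n + 1) ≠ 0
  · left
    have hle : Finsupp.single (n + 1) 1 ≤ m := by rw [Finsupp.single_le_iff]; omega
    have hsub : (m - Finsupp.single (n + 1) 1) + Finsupp.single (n + 1) 1 = m :=
      tsub_add_cancel_of_le hle
    have hw2 : weight wt (m - Finsupp.single (n + 1) 1) + weight wt (Finsupp.single (n + 1) 1)
        = n + 2 := by rw [← map_add, hsub, hw]
    rw [weight_single] at hw2
    have hr : weight wt (m - Finsupp.single (n + 1) 1) = 0 := by omega
    have := weight_zero_imp hr
    have hm : m = Finsupp.single (n + 1) 1 := by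
      rw [← hsub, this, zero_add]
    exact hm
  · right
    push_neg at htop
    intro s hs
    have h1 : 1 ≤ s := by
      rcases Nat.eq_zero_or_pos s with h | h
      · subst h; exact absurd h0 hs
      · exact h
    have hle : s + 1 ≤ n + 2 := by
      have := Finsupp.le_weight_of_ne_zero' (w := wt) hs
      rw [hw] at this
      simpa [wt] using this
    -- exclude s = n
    have hsn : s ≠ n := by
      intro hsn
      have hs2 : m n ≠ 0 := by rw [← hsn]; exact hs
      have hterm := term_le_weight m n hs2
      rw [hw] at hterm
      have hms : m n = 1 := by
        by_contra hm2
        have h2 : 2 ≤ m n := by omega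
        have h3 : 2 * (n + 1) ≤ m n * (n + 1) := Nat.mul_le_mul_right _ h2
        omega
      have hle2 : Finsupp.single n 1 ≤ m := by rw [Finsupp.single_le_iff]; omega
      have hsub : (m - Finsupp.single n 1) + Finsupp.single n 1 = m := tsub_add_cancel_of_le hle2
      have hw2 : weight wt (m - Finsupp.single n 1) + weight wt (Finsupp.single n 1) = n + 2 := by
        rw [← map_add, hsub, hw]
      rw [weight_single] at hw2
      have hr1 : weight wt (m - Finsupp.single n 1) = 1 := by omega
      have hrne : (m - Finsupp.single n 1) ≠ 0 := by
        intro h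
        rw [h, map_zero] at hr1
        omega
      obtain ⟨i, hi⟩ := Finsupp.ne_iff.mp hrne
      rw [Finsupp.coe_zero, Pi.zero_apply] at hi
      have hwi := Finsupp.le_weight_of_ne_zero' (w := wt) hi
      rw [hr1] at hwi
      have hi0 : i = 0 := by simpa [wt] using hwi
      subst hi0
      have hsingle0 : Finsupp.single n 1 0 = 0 := Finsupp.single_eq_of_ne (by omega)
      rw [Finsupp.tsub_apply, h0, hsingle0] at hi
      exact hi rfl
    have hsn1 : s ≠ n + 1 := fun h => hs (by rw [h]; exact htop)
    constructor
    · exact h1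
    · omega

lemma LD_aeval_any {σ : Type} (g : σ → MvPolynomial ℕ ℝ) (hg : ∀ i, LD (g i) = 0)
    (P : MvPolynomial σ ℝ) : LD (aeval g P) = 0 := by
  induction P using MvPolynomial.induction_on with
  | C a => rw [aeval_C]; exact LD.map_algebraMap a
  | add p q hp hq => rw [map_add, map_add, hp, hq, add_zero]
  | mul_X p j hp => rw [map_mul, aeval_X, Derivation.leibniz, hp, hg, smul_zero, smul_zero, add_zero]

end BRaux9


open BRaux BRaux2 BRaux3 BRaux4 BRaux5 BRaux6 BRaux7 BRaux8 BRaux9 Finsupp in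
/-- Buchstaber–Rees: a homogeneous differential polynomial 𝒟 of degree −2(n+2)
(weighted homogeneous of weight n+2 for w(y_j)=j) satisfies 𝓛𝒟 = 0 if and only
if 𝒟 = c·𝒟_{n+1} − P(𝒟_1,…,𝒟_{n−1}) for a constant c and a homogeneous
polynomial P(x_2,…,x_n) of degree n+2 (grading deg x_j = j); here 𝒟_j = Z_{j+1},
and the variable `i : Fin (n-1)` of P represents x_{i+2}, substituted by
𝒟_{i+1} = Z_{i+2}. -/
theorem Buchstaber_Rees (n : ℕ) (hn : 1 ≤ n) (D : MvPolynomial ℕ ℝ)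
    (hhom : D.IsWeightedHomogeneous (fun i => i + 1) (n + 2)) :
    Lder D = 0 ↔
    ∃ (c : ℝ) (P : MvPolynomial (Fin (n - 1)) ℝ),
      MvPolynomial.IsWeightedHomogeneous (fun i : Fin (n - 1) => (i : ℕ) + 2) P (n + 2) ∧
      D = (C c : MvPolynomial ℕ ℝ) * Z (n + 2) - aeval (fun i : Fin (n - 1) => Z ((i : ℕ) + 2)) P := by
  constructor
  · intro hL
    have hLD : LD D = 0 := by rw [← Lder_eq]; exact hL
    obtain ⟨Q, hψQ, hQhom, hQpd⟩ := exists_Q (N := n + 2) hhom hLD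
    set c := coeff (Finsupp.single (n + 1) 1) Q with hc
    set Q' := Q - C c * X (n + 1) with hQ'def
    have hmono : (C c * X (n + 1) : MvPolynomial ℕ ℝ) = monomial (Finsupp.single (n + 1) 1) c := by
      rw [C_apply, X, monomial_mul, zero_add, mul_one]
    have hQ'supp : ∀ m ∈ Q'.support, ∀ s, m s ≠ 0 → 1 ≤ s ∧ s < n := by
      intro m hm
      have hcm : coeff m Q' ≠ 0 := MvPolynomial.mem_support_iff.mp hm
      have hne : m ≠ Finsupp.single (n + 1) 1 := by
        intro he
        apply hcm
        rw [hQ'def, coeff_sub, hmono, coeff_monomial, he, if_pos rfl]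
        exact sub_self _
      have hmQ : m ∈ Q.support := by
        rw [MvPolynomial.mem_support_iff]
        intro h
        apply hcm
        rw [hQ'def, coeff_sub, hmono, coeff_monomial, if_neg (fun h2 => hne h2.symm), h]
        exact sub_self _
      have h0 : m 0 = 0 := support_m0 hQpd hmQ
      have hw : weight wt m = n + 2 := hQhom (MvPolynomial.mem_support_iff.mp hmQ)
      rcases support_classify hn hw h0 with h | h
      · exact absurd h hne
      · exact h
    have hQ'mem : Q' ∈ MvPolynomial.supported ℝ {i | 1 ≤ i ∧ i < n} := by
      rw [MvPolynomial.mem_supported]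
      intro i hi
      rw [Finset.mem_coe, MvPolynomial.mem_vars] at hi
      obtain ⟨m, hm, him⟩ := hi
      exact hQ'supp m hm i (Finsupp.mem_support_iff.mp him)
    have hQ'hom : IsWeightedHomogeneous wt Q' (n + 2) := by
      rw [hQ'def, ← mem_weightedHomogeneousSubmodule ℝ]
      apply Submodule.sub_mem
      · exact hQhom
      · rw [mem_weightedHomogeneousSubmodule ℝ]
        refine homog_congr' ((isWeightedHomogeneous_C wt c).mul
          (isWeightedHomogeneous_X ℝ wt (n + 1))) ?_
        simp [wt]
    set f : ℕ → MvPolynomial (Fin (n - 1)) ℝ :=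
      fun s => if h : 1 ≤ s ∧ s < n then X (⟨s - 1, by omega⟩ : Fin (n - 1)) else 0 with hf
    set P0 : MvPolynomial (Fin (n - 1)) ℝ := aeval f Q' with hP0
    have hP0hom : IsWeightedHomogeneous (fun i : Fin (n - 1) => (i : ℕ) + 2) P0 (n + 2) := by
      refine aeval_homog _ f ?_ hQ'hom
      intro i
      by_cases h : 1 ≤ i ∧ i < n
      · rw [hf]
        simp only [dif_pos h]
        refine homog_congr' (isWeightedHomogeneous_X ℝ _ _) ?_
        show ((⟨i - 1, by omega⟩ : Fin (n - 1)) : ℕ) + 2 = wt i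
        show (i - 1) + 2 = i + 1
        omega
      · rw [hf]
        simp only [dif_neg h]
        exact isWeightedHomogeneous_zero ℝ _ _
    have hround : aeval (fun i : Fin (n - 1) => Z ((i : ℕ) + 2)) P0 = ψ Q' := by
      rw [hP0]
      rw [show (aeval (fun i : Fin (n - 1) => Z ((i : ℕ) + 2))) ((aeval f) Q')
          = ((aeval (fun i : Fin (n - 1) => Z ((i : ℕ) + 2))).comp (aeval f)) Q' from rfl,
        comp_aeval]
      refine aeval_congr {i | 1 ≤ i ∧ i < n} _ _ ?_ hQ'mem
      intro i hi
      have hi' : 1 ≤ i ∧ i < n := hi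
      rw [hf]
      simp only [dif_pos hi']
      rw [aeval_X]
      rw [gψ, if_neg (by omega : ¬ i = 0)]
      show Z ((i - 1) + 2) = Z (i + 1)
      congr 1
      omega
    refine ⟨c, -P0, ?_, ?_⟩
    · rw [← mem_weightedHomogeneousSubmodule ℝ]
      exact Submodule.neg_mem _ hP0hom
    · rw [map_neg, sub_neg_eq_add, hround]
      have hsplit : Q = C c * X (n + 1) + Q' := by rw [hQ'def]; ring
      rw [← hψQ, hsplit, map_add, map_mul]
      congr 1
      · congr 1
        · show aeval gψ (C c) = C c
          rw [aeval_C, MvPolynomial.algebraMap_eq]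
        · show aeval gψ (X (n + 1)) = Z (n + 2)
          rw [aeval_X, gψ, if_neg (Nat.succ_ne_zero n)]
  · rintro ⟨c, P, hP, rfl⟩
    rw [Lder_eq, map_sub, C_mul', Derivation.map_smul, LD_Z, smul_zero,
      LD_aeval_any (fun i : Fin (n - 1) => Z ((i : ℕ) + 2))
        (fun i => LD_Z ((i : ℕ) + 2)) P, sub_zero]
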